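/- Let R be an integral domain. If there exists an R-algebra S that is free of rank > 1 as an R-module and is Gaussian over R (i.e., c(fg) = c(f)·c(g) for all f, g ∈ S), then R is a Prüfer domain. -/

import Mathlib

/-- The Ohm-Rush content of `f ∈ M`: the intersection of all ideals `I` of `R`
with `f ∈ I·M`. -/
noncomputable def ohmRushContent (R : Type*) {M : Type*} [CommRing R] [AddCommGroup M]
    [Module R M] (f : M) : Ideal R :=
  sInf {I : Ideal R | f ∈ I • (⊤ : Submodule R M)}

section Content

variable {R M : Type*} [CommRing R] [AddCommGroup M] [Module R M]

theorem ohmRushContent_le {f : M} {I : Ideal R} (h : f ∈ I • (⊤ : Submodule R M)) :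
    ohmRushContent R f ≤ I :=
  sInf_le h

theorem repr_mem_of_mem_smul {ι : Type*} (b : Module.Basis ι R M) {I : Ideal R} {f : M}
    (h : f ∈ I • (⊤ : Submodule R M)) (i : ι) : b.repr f i ∈ I := by
  refine Submodule.smul_induction_on h (fun r hr n _ => ?_) (fun x y hx hy => ?_)
  · rw [map_smul, Finsupp.smul_apply, smul_eq_mul]
    exact I.mul_mem_right _ hr
  · rw [map_add, Finsupp.add_apply]
    exact I.add_mem hx hy

theorem ohmRushContent_pair {ι : Type*} (b : Module.Basis ι R M) {i j : ι} (hij : i ≠ j)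
    (x y : R) : ohmRushContent R (x • b i + y • b j) = Ideal.span {x, y} := by
  apply le_antisymm
  · apply ohmRushContent_le
    exact Submodule.add_mem _
      (Submodule.smul_mem_smul (Ideal.subset_span (by simp)) trivial)
      (Submodule.smul_mem_smul (Ideal.subset_span (by simp)) trivial)
  · refine le_sInf fun I hI => Ideal.span_le.mpr ?_
    have hx : b.repr (x • b i + y • b j) i = x := by
      simp [Module.Basis.repr_self, Finsupp.single_apply, hij, hij.symm]
    have hy : b.repr (x • b i + y • b j) j = y := by
      simp [Module.Basis.repr_self, Finsupp.single_apply, hij, hij.symm]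
    rintro z (rfl | rfl)
    · exact hx ▸ repr_mem_of_mem_smul b hI i
    · exact hy ▸ repr_mem_of_mem_smul b hI j

end Content

/-- The key elementwise "degree-one Gaussian" property of a commutative ring. -/
def DegOneGauss (A : Type*) [CommRing A] : Prop :=
  ∀ a b c d : A, a * d ∈ Ideal.span {a * c, a * d + b * c, b * d}

theorem mem_span_triple {A : Type*} [CommRing A] {x a b c : A} :
    x ∈ Ideal.span ({a, b, c} : Set A) ↔ ∃ p q r : A, p * a + q * b + r * c = x := by
  constructor
  · intro h
    rw [Ideal.mem_span_insert] at h
    obtain ⟨p, z, hz, rfl⟩ := h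
    rw [Ideal.mem_span_pair] at hz
    obtain ⟨q, r, rfl⟩ := hz
    exact ⟨p, q, r, by ring⟩
  · rintro ⟨p, q, r, rfl⟩
    exact Ideal.add_mem _ (Ideal.add_mem _
      (Ideal.mul_mem_left _ _ (Ideal.subset_span (by simp)))
      (Ideal.mul_mem_left _ _ (Ideal.subset_span (by simp))))
      (Ideal.mul_mem_left _ _ (Ideal.subset_span (by simp)))

section Gauss

variable {R S : Type*} [CommRing R] [CommRing S] [Algebra R S]

/-- From a Gaussian free algebra of rank `> 1` we get the degree-one Gaussian property. -/
theorem degOneGauss_of_gaussian [Module.Free R S] [Nontrivial R]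
    (hrank : 1 < Module.rank R S)
    (hGauss : ∀ f g : S,
      ohmRushContent R (f * g) = ohmRushContent R f * ohmRushContent R g) :
    DegOneGauss R := by
  intro a b c d
  set ι := Module.Free.ChooseBasisIndex R S
  have hcard : 1 < Cardinal.mk ι := by
    rw [← Module.Free.rank_eq_card_chooseBasisIndex]; exact hrank
  have : Nontrivial ι := Cardinal.one_lt_iff_nontrivial.mp hcard
  obtain ⟨i, j, hij⟩ := exists_pair_ne ι
  set e := Module.Free.chooseBasis R S
  set f := a • e i + b • e j with hf
  set g := c • e i + d • e j with hg
  have hfg : f * g = (a * c) • (e i * e i) + (a * d + b * c) • (e i * e j)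
      + (b * d) • (e j * e j) := by
    simp only [hf, hg, add_mul, mul_add, smul_mul_smul_comm, add_smul]
    rw [mul_comm (e j) (e i)]
    abel
  have hcont : ohmRushContent R (f * g) ≤ Ideal.span {a * c, a * d + b * c, b * d} := by
    apply ohmRushContent_le
    rw [hfg]
    refine Submodule.add_mem _ (Submodule.add_mem _ ?_ ?_) ?_ <;>
      exact Submodule.smul_mem_smul (Ideal.subset_span (by simp)) trivial
  rw [hGauss, ohmRushContent_pair e hij, ohmRushContent_pair e hij] at hcont
  exact hcont (Ideal.mul_mem_mul (Ideal.subset_span (by simp)) (Ideal.subset_span (by simp)))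

end Gauss


section Localize

/-- `DegOneGauss` passes to localizations. -/
theorem DegOneGauss.localization {R A : Type*} [CommRing R] [CommRing A] [Algebra R A]
    (M : Submonoid R) [IsLocalization M A] (hR : DegOneGauss R) : DegOneGauss A := by
  intro x y z w
  obtain ⟨a, s, hx⟩ := IsLocalization.exists_mk'_eq M x
  obtain ⟨b, t, hy⟩ := IsLocalization.exists_mk'_eq M y
  obtain ⟨c, u, hz⟩ := IsLocalization.exists_mk'_eq M z
  obtain ⟨d, v, hw⟩ := IsLocalization.exists_mk'_eq M w
  set φ := algebraMap R A
  have hx' : x * φ (s * t) = φ (a * t) := by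
    rw [← hx, map_mul, map_mul, ← mul_assoc, IsLocalization.mk'_spec]
  have hy' : y * φ (s * t) = φ (b * s) := by
    rw [← hy, map_mul, map_mul, mul_comm (φ s) (φ t), ← mul_assoc, IsLocalization.mk'_spec,
      mul_comm]
  have hz' : z * φ (u * v) = φ (c * v) := by
    rw [← hz, map_mul, map_mul, ← mul_assoc, IsLocalization.mk'_spec]
  have hw' : w * φ (u * v) = φ (d * u) := by
    rw [← hw, map_mul, map_mul, mul_comm (φ u) (φ v), ← mul_assoc, IsLocalization.mk'_spec,
      mul_comm]
  obtain ⟨p, q, r, hpqr⟩ := mem_span_triple.mp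
    (hR (a * t) (b * s) (c * v) (d * u))
  simp only [map_mul] at hx' hy' hz' hw'
  have hunit : IsUnit (φ s * φ t * (φ u * φ v)) :=
    ((IsLocalization.map_units A s).mul (IsLocalization.map_units A t)).mul
      ((IsLocalization.map_units A u).mul (IsLocalization.map_units A v))
  rw [mem_span_triple]
  refine ⟨φ p, φ q, φ r, ?_⟩
  apply hunit.mul_left_cancel
  have key := congrArg φ hpqr
  simp only [map_add, map_mul] at key
  calc φ s * φ t * (φ u * φ v) * (φ p * (x * z) + φ q * (x * w + y * z) + φ r * (y * w))
      = φ p * ((x * (φ s * φ t)) * (z * (φ u * φ v)))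
        + φ q * ((x * (φ s * φ t)) * (w * (φ u * φ v))
          + (y * (φ s * φ t)) * (z * (φ u * φ v)))
        + φ r * ((y * (φ s * φ t)) * (w * (φ u * φ v))) := by ring
    _ = φ p * (φ a * φ t * (φ c * φ v)) + φ q * (φ a * φ t * (φ d * φ u)
          + φ b * φ s * (φ c * φ v)) + φ r * (φ b * φ s * (φ d * φ u)) := by
        rw [hx', hy', hz', hw']
    _ = φ a * φ t * (φ d * φ u) := key
    _ = φ s * φ t * (φ u * φ v) * (x * w) := by rw [← hx', ← hw']; ring

end Localize

section Local

theorem span_pair_eq_singleton {A : Type*} [CommRing A] {u v w : A} (hv : v = w * u) :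
    Ideal.span ({u, v} : Set A) = Ideal.span {u} := by
  apply le_antisymm
  · rw [Ideal.span_le]
    rintro z (rfl | rfl)
    · exact Ideal.subset_span rfl
    · exact hv ▸ Ideal.mul_mem_left _ w (Ideal.subset_span rfl)
  · exact Ideal.span_mono (by simp)

variable {A : Type*} [CommRing A] [IsDomain A] [IsLocalRing A]

omit [IsDomain A] [IsLocalRing A] in
theorem mul_mem_sq (hA : DegOneGauss A) {x y c d : A}
    (h : y * y = c * (x * x) + d * (x * y)) :
    x * y ∈ Ideal.span ({x * x} : Set A) := by
  obtain ⟨p, q, r, hpqr⟩ := mem_span_triple.mp (hA x (-y) x (y - d * x))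
  rw [Ideal.mem_span_singleton']
  exact ⟨p - q * d - r * c + d, by linear_combination hpqr + r * h⟩

theorem span_pair_isPrincipal (hA : DegOneGauss A) (x y : A) :
    (Ideal.span ({x, y} : Set A)).IsPrincipal := by
  have key : ∀ u v : A, u ≠ 0 → u * v ∈ Ideal.span ({u * u} : Set A) →
      (Ideal.span ({u, v} : Set A)).IsPrincipal := by
    intro u v hu huv
    rw [Ideal.mem_span_singleton'] at huv
    obtain ⟨w, hw⟩ := huv
    have hv : v = w * u := mul_left_cancel₀ hu (by rw [← hw]; ring)
    exact ⟨u, span_pair_eq_singleton hv⟩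
  rcases eq_or_ne x 0 with rfl | hx
  · exact ⟨y, Ideal.span_pair_comm.trans (span_pair_eq_singleton (w := 0) (by ring))⟩
  rcases eq_or_ne y 0 with rfl | hy
  · exact ⟨x, span_pair_eq_singleton (w := 0) (by ring)⟩
  obtain ⟨p, q, r, h1⟩ := mem_span_triple.mp (hA x y y x)
  -- h1 : p * (x*y) + q * (x*x + y*y) + r * (y*x) = x*x
  rcases IsLocalRing.isUnit_or_isUnit_of_add_one (a := q) (b := 1 - q) (by ring) with hq | hq
  · obtain ⟨u, hu⟩ := hq
    have huq : (↑u⁻¹ : A) * q = 1 := by rw [← hu]; exact u.inv_mul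
    have h2 : y * y = (↑u⁻¹ * (1 - q)) * (x * x) + (-(↑u⁻¹ * (p + r))) * (x * y) := by
      linear_combination (↑u⁻¹ : A) * h1 - y * y * huq
    exact key x y hx (mul_mem_sq hA h2)
  · obtain ⟨u, hu⟩ := hq
    have huq : (↑u⁻¹ : A) * (1 - q) = 1 := by rw [← hu]; exact u.inv_mul
    have h2 : x * x = (↑u⁻¹ * q) * (y * y) + (↑u⁻¹ * (p + r)) * (y * x) := by
      linear_combination (-(↑u⁻¹ : A)) * h1 - x * x * huq
    exact Ideal.span_pair_comm (x := y) (y := x) ▸ key y x hy (mul_mem_sq hA h2)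

theorem fg_isPrincipal (hA : DegOneGauss A) (I : Ideal A) (h : I.FG) : I.IsPrincipal := by
  obtain ⟨s, rfl⟩ := h
  classical
  induction s using Finset.induction with
  | empty => exact ⟨0, by rw [Finset.coe_empty, Ideal.span_empty,
      Submodule.span_zero_singleton]⟩
  | @insert a s ha ih =>
    obtain ⟨g, hg⟩ := ih
    rw [Finset.coe_insert, Ideal.span_insert, hg]
    have : (Ideal.span {a} ⊔ Ideal.span {g} : Ideal A).IsPrincipal := by
      rw [← Ideal.span_insert]
      exact span_pair_isPrincipal hA a g
    exact this

/-- In a local domain, a principal ideal spanned by a finset is spanned by one of its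
elements, or is zero. -/
theorem span_finset_generator (s : Finset A)
    (hp : (Ideal.span (s : Set A)).IsPrincipal) :
    Ideal.span (s : Set A) = ⊥ ∨ ∃ a ∈ s, Ideal.span (s : Set A) = Ideal.span {a} := by
  classical
  obtain ⟨g, hg⟩ := hp
  have hg' : Ideal.span (s : Set A) = Ideal.span {g} := hg
  rcases eq_or_ne g 0 with rfl | hg0
  · left; rw [hg', Ideal.span_singleton_eq_bot]
  right
  have hgmem : g ∈ Ideal.span (s : Set A) := hg' ▸ Ideal.subset_span rfl
  obtain ⟨f, -, hf⟩ := Submodule.mem_span_finset.mp hgmem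
  have hd : ∀ x ∈ s, ∃ d : A, x = d * g := by
    intro x hx
    have : x ∈ Ideal.span ({g} : Set A) := hg' ▸ Ideal.subset_span hx
    rw [Ideal.mem_span_singleton] at this
    obtain ⟨d, hd⟩ := this
    exact ⟨d, by rw [hd, mul_comm]⟩
  choose dd hdspec using hd
  have hsum : (∑ x ∈ s.attach, f ↑x * dd ↑x x.2) * g = g := by
    rw [Finset.sum_mul]
    calc ∑ x ∈ s.attach, f ↑x * dd ↑x x.2 * g
        = ∑ x ∈ s.attach, f ↑x * ↑x := by
          refine Finset.sum_congr rfl fun x _ => ?_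
          rw [mul_assoc, ← hdspec ↑x x.2]
      _ = ∑ x ∈ s, f x * x := Finset.sum_attach s (fun x => f x * x)
      _ = g := by simpa [smul_eq_mul] using hf
  have hone : ∑ x ∈ s.attach, f ↑x * dd ↑x x.2 = 1 :=
    mul_right_cancel₀ hg0 (by rw [hsum, one_mul])
  have hunit : ∃ x : {a // a ∈ s}, IsUnit (f ↑x * dd ↑x x.2) := by
    by_contra hcon
    push_neg at hcon
    have : (1 : A) ∈ IsLocalRing.maximalIdeal A := by
      rw [← hone]
      exact Ideal.sum_mem _ fun x _ => hcon x
    exact this isUnit_one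
  obtain ⟨x, hx⟩ := hunit
  refine ⟨↑x, x.2, ?_⟩
  rw [hg']
  have hgx : Associated g (↑x : A) := by
    refine ⟨(isUnit_of_mul_isUnit_right hx).unit, ?_⟩
    rw [IsUnit.unit_spec, mul_comm]
    exact (hdspec ↑x x.2).symm
  exact Ideal.span_singleton_eq_span_singleton.mpr hgx

end Local

/-- If an integral domain `R` admits a Gaussian algebra `S` that is free of rank `> 1`
as an `R`-module, then `R` is a Prüfer domain, i.e. every nonzero finitely generated
ideal of `R` is invertible as a fractional ideal. -/
theorem prufer_of_gaussian_free_algebra (R S : Type*) [CommRing R] [IsDomain R]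
    [CommRing S] [Algebra R S] [Module.Free R S] (hrank : 1 < Module.rank R S)
    (hGauss : ∀ f g : S,
      ohmRushContent R (f * g) = ohmRushContent R f * ohmRushContent R g) :
    ∀ I : Ideal R, I.FG → I ≠ ⊥ →
      IsUnit (I : FractionalIdeal (nonZeroDivisors R) (FractionRing R)) := by
  classical
  intro I hIfg hIbot
  set K := FractionRing R
  have hR : DegOneGauss R := degOneGauss_of_gaussian hrank hGauss
  have hInz : (I : FractionalIdeal (nonZeroDivisors R) K) ≠ 0 := by
    rwa [ne_eq, FractionalIdeal.coeIdeal_eq_zero' le_rfl]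
  rw [← FractionalIdeal.mul_inv_cancel_iff_isUnit]
  have hle : (I : FractionalIdeal (nonZeroDivisors R) K) * (↑I)⁻¹ ≤ 1 := by
    rw [FractionalIdeal.inv_eq]
    refine FractionalIdeal.mul_le.mpr fun i hi j hj => ?_
    rw [← FractionalIdeal.inv_eq, FractionalIdeal.mem_inv_iff hInz] at hj
    exact mul_comm i j ▸ hj i hi
  obtain ⟨T, hT⟩ := FractionalIdeal.le_one_iff_exists_coeIdeal.mp hle
  suffices hTtop : T = ⊤ by rw [← hT, hTtop, FractionalIdeal.coeIdeal_top]
  by_contra hTne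
  obtain ⟨m, hmmax, hTm⟩ := Ideal.exists_le_maximal T hTne
  haveI := hmmax.isPrime
  set A := Localization.AtPrime m
  have hmA : DegOneGauss A := DegOneGauss.localization m.primeCompl hR
  obtain ⟨s, hs⟩ := hIfg
  set ψ := algebraMap R A with hψ
  have hmap : Ideal.map ψ I = Ideal.span ((s.image ψ : Finset A) : Set A) := by
    rw [← hs, Ideal.map_span, Finset.coe_image]
  have hprin : (Ideal.span ((s.image ψ : Finset A) : Set A)).IsPrincipal :=
    fg_isPrincipal hmA _ ⟨s.image ψ, rfl⟩
  -- the image span is nonzero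
  obtain ⟨x₀, hx₀I, hx₀⟩ := Submodule.exists_mem_ne_zero_of_ne_bot hIbot
  have hne : Ideal.span ((s.image ψ : Finset A) : Set A) ≠ ⊥ := by
    intro hbot
    have : ψ x₀ ∈ Ideal.map ψ I := Ideal.mem_map_of_mem ψ hx₀I
    rw [hmap, hbot, Submodule.mem_bot] at this
    obtain ⟨c, hc⟩ := (IsLocalization.map_eq_zero_iff m.primeCompl A x₀).mp this
    have hc0 : (c : R) ≠ 0 := fun h => c.2 (h ▸ m.zero_mem)
    exact hx₀ (by simpa [hc0] using hc)
  rcases span_finset_generator (s.image ψ) hprin with hbot | ⟨a', ha's, hgen⟩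
  · exact hne hbot
  obtain ⟨a₀, ha₀s, rfl⟩ := Finset.mem_image.mp ha's
  have ha₀ : a₀ ≠ 0 := by
    rintro rfl
    apply hne
    rw [hgen, map_zero]
    exact Ideal.span_singleton_eq_bot.mpr rfl
  -- every generator is divisible by a₀ after clearing a denominator
  have hdvd : ∀ a ∈ s, ∃ u : m.primeCompl, ∃ r : R, a * u = r * a₀ := by
    intro a ha
    have hmem : ψ a ∈ Ideal.span ({ψ a₀} : Set A) :=
      hgen ▸ Ideal.subset_span (Finset.mem_image_of_mem ψ ha)
    rw [Ideal.mem_span_singleton'] at hmem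
    obtain ⟨z, hz⟩ := hmem
    obtain ⟨r, u, rfl⟩ := IsLocalization.exists_mk'_eq m.primeCompl z
    have : ψ (a * u) = ψ (r * a₀) := by
      rw [map_mul, map_mul, ← hz, mul_comm (IsLocalization.mk' A r u) (ψ a₀), mul_assoc,
        IsLocalization.mk'_spec, mul_comm (ψ a₀) (ψ r)]
    obtain ⟨c, hc⟩ := (IsLocalization.eq_iff_exists m.primeCompl A).mp this
    exact ⟨u * c, r * c, by push_cast; linear_combination hc⟩
  choose uu rr huu using hdvd
  set t : R := ∏ x ∈ s.attach, (uu ↑x x.2 : R) with ht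
  have htm : t ∈ m.primeCompl :=
    Submonoid.prod_mem _ fun x _ => (uu ↑x x.2).2
  -- every element of I multiplied by t is divisible by a₀
  have hIW : ∀ x ∈ I, ∃ w : R, w * a₀ = x * t := by
    have hle' : I ≤ (Ideal.span {a₀}).colon (Ideal.span {t}) := by
      rw [← hs, Ideal.span_le]
      intro a ha
      rw [SetLike.mem_coe, Ideal.mem_colon_span_singleton, ht,
        ← Finset.mul_prod_erase s.attach _ (Finset.mem_attach s ⟨a, ha⟩), ← mul_assoc,
        huu a ha]
      exact Ideal.mul_mem_right _ _ (Ideal.mul_mem_left _ _ (Ideal.subset_span rfl))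
    intro x hx
    have := Ideal.mem_colon_span_singleton.mp (hle' hx)
    rwa [Ideal.mem_span_singleton'] at this
  set φ := algebraMap R K with hφ
  have hφa₀ : φ a₀ ≠ 0 :=
    fun h => ha₀ (IsFractionRing.injective R K (h.trans (map_zero φ).symm))
  set k : K := φ t / φ a₀ with hk
  have hkmem : k ∈ (I : FractionalIdeal (nonZeroDivisors R) K)⁻¹ := by
    rw [FractionalIdeal.mem_inv_iff hInz]
    intro y hy
    obtain ⟨x, hxI, rfl⟩ := (FractionalIdeal.mem_coeIdeal _).mp hy
    obtain ⟨w, hw⟩ := hIW x hxI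
    rw [FractionalIdeal.mem_one_iff]
    refine ⟨w, ?_⟩
    rw [hk, div_mul_eq_mul_div, eq_div_iff hφa₀, ← map_mul, ← map_mul, mul_comm t x, ← hw,
      map_mul]
  have hφt : φ t ∈ (T : FractionalIdeal (nonZeroDivisors R) K) := by
    rw [hT]
    have h1 : φ a₀ ∈ (I : FractionalIdeal (nonZeroDivisors R) K) :=
      FractionalIdeal.mem_coeIdeal_of_mem _ (hs ▸ Ideal.subset_span ha₀s)
    have := FractionalIdeal.mul_mem_mul h1 hkmem
    rwa [hk, mul_div_cancel₀ _ hφa₀] at this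
  obtain ⟨t', ht'T, ht'⟩ := (FractionalIdeal.mem_coeIdeal _).mp hφt
  have : t ∈ T := (IsFractionRing.injective R K ht') ▸ ht'T
  exact htm (hTm this)
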